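/- Let F = (f_ω)_{ω ∈ ∂B} be a border basis for B connected to 1 with commuting multiplication operators, and let Ξ ⊆ K[x]^{∂B} be the submodule generated by the commutation syzygies x_{i_1} μ^{i_2}(m) + μ^{i_1}(x_{i_2} m) − x_{i_2} μ^{i_1}(m) − μ^{i_2}(x_{i_1} m) for m ∈ B and i_1, i_2 ∈ {1,...,n}, where μ^i(p) = Σ_ω μ^i_{p,ω} e_ω. If m = x_{i_1}···x_{i_k} = x_{j_1}···x_{j_k} are two decompositions of the same monomial as products of variables, then Ξ_{x_{i_1},...,x_{i_k}} − Ξ_{x_{j_1},...,x_{j_k}} ∈ Ξ, where Ξ_{x_{i_1},...,x_{i_k}} = Σ_{l=1}^{k} x_{i_1}···x_{i_{l-1}} Σ_ω μ^{i_l}_{x_{i_{l+1}}···x_{i_k},ω} e_ω. -/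

import Mathlib

open MvPolynomial
open scoped Classical

abbrev Mon (n : ℕ) := Fin n →₀ ℕ

def prolong {n : ℕ} (B : Set (Mon n)) : Set (Mon n) :=
  B ∪ ⋃ i : Fin n, (fun m => Finsupp.single i 1 + m) '' B

def border {n : ℕ} (B : Set (Mon n)) : Set (Mon n) := prolong B \ B

noncomputable def varsSum {n : ℕ} (L : List (Fin n)) : Mon n :=
  (L.map fun i => Finsupp.single i 1).sum

def ConnectedTo1 {n : ℕ} (B : Set (Mon n)) : Prop :=
  0 ∈ B ∧ ∀ m ∈ B, ∃ L : List (Fin n), varsSum L = m ∧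
    ∀ L' : List (Fin n), L' <+: L → varsSum L' ∈ B

def degSum {n : ℕ} (m : Mon n) : ℕ := m.sum fun _ e => e
noncomputable def spanMon {n : ℕ} (K : Type) [Field K] (B : Set (Mon n)) :
    Submodule K (MvPolynomial (Fin n) K) :=
  Submodule.span K ((fun m => (monomial m (1 : K) : MvPolynomial (Fin n) K)) '' B)

noncomputable def piF {n : ℕ} {K : Type} [Field K] (B H : Set (Mon n))
    (ρ : Mon n → MvPolynomial (Fin n) K) (p : MvPolynomial (Fin n) K) :
    MvPolynomial (Fin n) K :=
  p.support.sum fun m =>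
    if m ∈ B then monomial m (p.coeff m)
    else if m ∈ H then p.coeff m • ρ m else 0

noncomputable def redList {n : ℕ} {K : Type} [Field K] (B H : Set (Mon n))
    (ρ : Mon n → MvPolynomial (Fin n) K) : List (Fin n) → MvPolynomial (Fin n) K
  | [] => 1
  | i :: L => piF B H ρ (X i * redList B H ρ L)

def DefinedOn {n : ℕ} {K : Type} [Field K] (B H : Set (Mon n))
    (p : MvPolynomial (Fin n) K) : Prop :=
  ↑p.support ⊆ B ∪ H

def RedDefined {n : ℕ} {K : Type} [Field K] (B H : Set (Mon n))
    (ρ : Mon n → MvPolynomial (Fin n) K) : List (Fin n) → Prop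
  | [] => True
  | i :: L => RedDefined B H ρ L ∧ DefinedOn B H (X i * redList B H ρ L)

def Eset {n : ℕ} {K : Type} [Field K] (B H : Set (Mon n))
    (ρ : Mon n → MvPolynomial (Fin n) K) : Set (Mon n) :=
  { m | ∀ L : List (Fin n), varsSum L = m → RedDefined B H ρ L }

/-- μ^i(q) ∈ K[x]^(∂B): the vector of coefficients μ^i_{q,ω} = coeff_ω(x_i·q)
    (for q ∈ ⟨B⟩) expressing x_i·q − π_F(x_i·q) = Σ_ω μ^i_{q,ω} f_ω. -/
noncomputable def muF {n : ℕ} {K : Type} [Field K] (B : Set (Mon n)) (i : Fin n)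
    (q : MvPolynomial (Fin n) K) : Mon n →₀ MvPolynomial (Fin n) K :=
  ∑ ω ∈ (X i * q).support,
    if ω ∈ border B then
      Finsupp.single ω (C ((X i * q).coeff ω) : MvPolynomial (Fin n) K)
    else 0

/-- The generators of the module Ξ of commutation syzygies:
    x_{i₁} μ^{i₂}(m) + μ^{i₁}(x_{i₂}m) − x_{i₂} μ^{i₁}(m) − μ^{i₂}(x_{i₁}m), m ∈ B. -/
noncomputable def XiGen {n : ℕ} {K : Type} [Field K] (B : Set (Mon n))
    (ρ : Mon n → MvPolynomial (Fin n) K) :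
    Set (Mon n →₀ MvPolynomial (Fin n) K) :=
  { v | ∃ m ∈ B, ∃ i1 i2 : Fin n,
    v = (X i1 : MvPolynomial (Fin n) K) • muF B i2 (monomial m (1 : K))
      + muF B i1 (piF B (border B) ρ (X i2 * monomial m (1 : K)))
      - (X i2 : MvPolynomial (Fin n) K) • muF B i1 (monomial m (1 : K))
      - muF B i2 (piF B (border B) ρ (X i1 * monomial m (1 : K))) }

/-- The vector Ξ_{x_{i₁},…,x_{i_k}} ∈ K[x]^(∂B) attached to a decomposition of a
    monomial as a product of variables. -/
noncomputable def XiList {n : ℕ} {K : Type} [Field K] (B : Set (Mon n))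
    (ρ : Mon n → MvPolynomial (Fin n) K) (L : List (Fin n)) :
    Mon n →₀ MvPolynomial (Fin n) K :=
  ∑ l : Fin L.length,
    (monomial (varsSum (L.take (l : ℕ))) (1 : K) : MvPolynomial (Fin n) K) •
      muF B (L.get l) (redList B (border B) ρ (L.drop ((l : ℕ) + 1)))

section Aux

variable {n : ℕ} {K : Type} [Field K]

noncomputable def nuF (B : Set (Mon n)) (p : MvPolynomial (Fin n) K) :
    Mon n →₀ MvPolynomial (Fin n) K :=
  p.support.sum fun ω => if ω ∈ border B then
    Finsupp.single ω (C (p.coeff ω) : MvPolynomial (Fin n) K) else 0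

lemma nuF_eq_sum (B : Set (Mon n)) (p : MvPolynomial (Fin n) K)
    {s : Finset (Mon n)} (hs : p.support ⊆ s) :
    nuF B p = s.sum fun ω => if ω ∈ border B then
      Finsupp.single ω (C (p.coeff ω) : MvPolynomial (Fin n) K) else 0 :=
  Finset.sum_subset hs fun m _ hm => by
    rw [MvPolynomial.notMem_support_iff.mp hm]
    split_ifs <;> simp

lemma muF_eq_nuF (B : Set (Mon n)) (i : Fin n) (q : MvPolynomial (Fin n) K) :
    muF B i q = nuF B (X i * q) := rfl

lemma nuF_apply (B : Set (Mon n)) (p : MvPolynomial (Fin n) K) :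
    nuF B p = p.support.sum fun ω => if ω ∈ border B then
      Finsupp.single ω (C (p.coeff ω) : MvPolynomial (Fin n) K) else 0 := rfl

lemma nuF_zero (B : Set (Mon n)) : nuF B (0 : MvPolynomial (Fin n) K) = 0 := by
  simp [nuF]

lemma nuF_add (B : Set (Mon n)) (p q : MvPolynomial (Fin n) K) :
    nuF B (p + q) = nuF B p + nuF B q := by
  rw [nuF_eq_sum B (p + q) (MvPolynomial.support_add),
    nuF_eq_sum B p (Finset.subset_union_left (s₂ := q.support)),
    nuF_eq_sum B q (Finset.subset_union_right (s₁ := p.support)),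
    ← Finset.sum_add_distrib]
  refine Finset.sum_congr rfl fun m _ => ?_
  rw [MvPolynomial.coeff_add]
  split_ifs <;> simp [map_add, Finsupp.single_add]

lemma nuF_smul (B : Set (Mon n)) (c : K) (p : MvPolynomial (Fin n) K) :
    nuF B (c • p) = (C c : MvPolynomial (Fin n) K) • nuF B p := by
  rw [nuF_eq_sum B (c • p) (MvPolynomial.support_smul), nuF_apply, Finset.smul_sum]
  refine Finset.sum_congr rfl fun m _ => ?_
  rw [MvPolynomial.coeff_smul]
  split_ifs <;> simp [Finsupp.smul_single', map_mul, smul_eq_mul]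

lemma muF_zero (B : Set (Mon n)) (i : Fin n) : muF B i (0 : MvPolynomial (Fin n) K) = 0 := by
  rw [muF_eq_nuF, mul_zero, nuF_zero]

lemma muF_add (B : Set (Mon n)) (i : Fin n) (p q : MvPolynomial (Fin n) K) :
    muF B i (p + q) = muF B i p + muF B i q := by
  rw [muF_eq_nuF, mul_add, nuF_add, muF_eq_nuF, muF_eq_nuF]

lemma muF_smul (B : Set (Mon n)) (i : Fin n) (c : K) (p : MvPolynomial (Fin n) K) :
    muF B i (c • p) = (C c : MvPolynomial (Fin n) K) • muF B i p := by
  rw [muF_eq_nuF, mul_smul_comm, nuF_smul, muF_eq_nuF]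

lemma piF_eq_sum (B H : Set (Mon n)) (ρ : Mon n → MvPolynomial (Fin n) K)
    (p : MvPolynomial (Fin n) K) {s : Finset (Mon n)} (hs : p.support ⊆ s) :
    piF B H ρ p = s.sum fun m =>
      if m ∈ B then monomial m (p.coeff m) else if m ∈ H then p.coeff m • ρ m else 0 :=
  Finset.sum_subset hs fun m _ hm => by
    rw [MvPolynomial.notMem_support_iff.mp hm]
    split_ifs <;> simp

lemma piF_apply (B H : Set (Mon n)) (ρ : Mon n → MvPolynomial (Fin n) K)
    (p : MvPolynomial (Fin n) K) :
    piF B H ρ p = p.support.sum fun m =>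
      if m ∈ B then monomial m (p.coeff m) else if m ∈ H then p.coeff m • ρ m else 0 := rfl

lemma piF_zero (B H : Set (Mon n)) (ρ : Mon n → MvPolynomial (Fin n) K) :
    piF B H ρ (0 : MvPolynomial (Fin n) K) = 0 := by
  simp [piF]

lemma piF_add (B H : Set (Mon n)) (ρ : Mon n → MvPolynomial (Fin n) K)
    (p q : MvPolynomial (Fin n) K) :
    piF B H ρ (p + q) = piF B H ρ p + piF B H ρ q := by
  rw [piF_eq_sum B H ρ (p + q) (MvPolynomial.support_add),
    piF_eq_sum B H ρ p (Finset.subset_union_left (s₂ := q.support)),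
    piF_eq_sum B H ρ q (Finset.subset_union_right (s₁ := p.support)),
    ← Finset.sum_add_distrib]
  refine Finset.sum_congr rfl fun m _ => ?_
  rw [MvPolynomial.coeff_add]
  split_ifs <;> simp [add_smul]

lemma piF_smulK (B H : Set (Mon n)) (ρ : Mon n → MvPolynomial (Fin n) K) (c : K)
    (p : MvPolynomial (Fin n) K) :
    piF B H ρ (c • p) = c • piF B H ρ p := by
  rw [piF_eq_sum B H ρ (c • p) (MvPolynomial.support_smul), piF_apply, Finset.smul_sum]
  refine Finset.sum_congr rfl fun m _ => ?_
  rw [MvPolynomial.coeff_smul]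
  split_ifs <;> simp [smul_smul, MvPolynomial.smul_monomial]

lemma mem_spanMon_of_support {B : Set (Mon n)} {p : MvPolynomial (Fin n) K}
    (h : ↑p.support ⊆ B) : p ∈ spanMon K B := by
  rw [← p.support_sum_monomial_coeff]
  refine Submodule.sum_mem _ fun m hm => ?_
  have : (monomial m (p.coeff m) : MvPolynomial (Fin n) K)
      = p.coeff m • monomial m (1 : K) := by
    rw [MvPolynomial.smul_monomial, smul_eq_mul, mul_one]
  rw [this]
  exact Submodule.smul_mem _ _ (Submodule.subset_span ⟨m, h hm, rfl⟩)

lemma piF_mem_spanMon {B : Set (Mon n)} {ρ : Mon n → MvPolynomial (Fin n) K}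
    (hρ : ∀ ω ∈ border B, ↑(ρ ω).support ⊆ B) (p : MvPolynomial (Fin n) K) :
    piF B (border B) ρ p ∈ spanMon K B := by
  rw [piF_apply]
  refine Submodule.sum_mem _ fun m _ => ?_
  by_cases h1 : m ∈ B
  · simp only [h1, if_true]
    have : (monomial m (p.coeff m) : MvPolynomial (Fin n) K)
        = p.coeff m • monomial m (1 : K) := by
      rw [MvPolynomial.smul_monomial, smul_eq_mul, mul_one]
    rw [this]
    exact Submodule.smul_mem _ _ (Submodule.subset_span ⟨m, h1, rfl⟩)
  · simp only [h1, if_false]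
    by_cases h2 : m ∈ border B
    · simp only [h2, if_true]
      exact Submodule.smul_mem _ _ (mem_spanMon_of_support (hρ m h2))
    · simp only [h2, if_false]; exact Submodule.zero_mem _

lemma redList_mem_spanMon {B : Set (Mon n)} {ρ : Mon n → MvPolynomial (Fin n) K}
    (hB0 : (0 : Mon n) ∈ B) (hρ : ∀ ω ∈ border B, ↑(ρ ω).support ⊆ B)
    (L : List (Fin n)) : redList B (border B) ρ L ∈ spanMon K B := by
  cases L with
  | nil =>
    have h1 : redList B (border B) ρ ([] : List (Fin n)) = monomial 0 (1 : K) := by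
      simp [redList, MvPolynomial.monomial_zero']
    rw [h1]
    exact Submodule.subset_span ⟨0, hB0, rfl⟩
  | cons i L => exact piF_mem_spanMon hρ _

lemma redList_perm {B : Set (Mon n)} {ρ : Mon n → MvPolynomial (Fin n) K}
    (hB0 : (0 : Mon n) ∈ B) (hρ : ∀ ω ∈ border B, ↑(ρ ω).support ⊆ B)
    (hcomm : ∀ b ∈ spanMon K B, ∀ i j : Fin n,
      piF B (border B) ρ (X i * piF B (border B) ρ (X j * b)) =
      piF B (border B) ρ (X j * piF B (border B) ρ (X i * b)))
    {L L' : List (Fin n)} (hp : L.Perm L') :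
    redList B (border B) ρ L = redList B (border B) ρ L' := by
  induction hp with
  | nil => rfl
  | cons x _ ih => rw [redList, redList, ih]
  | swap x y L =>
    show redList B (border B) ρ (y :: x :: L) = redList B (border B) ρ (x :: y :: L)
    rw [redList, redList, redList, redList]
    exact hcomm _ (redList_mem_spanMon hB0 hρ L) y x
  | trans _ _ ih1 ih2 => rw [ih1, ih2]

lemma varsSum_nil : varsSum ([] : List (Fin n)) = 0 := rfl

lemma varsSum_cons (i : Fin n) (L : List (Fin n)) :
    varsSum (i :: L) = Finsupp.single i 1 + varsSum L := by
  simp [varsSum]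

lemma varsSum_apply (L : List (Fin n)) (i : Fin n) : varsSum L i = L.count i := by
  induction L with
  | nil => simp [varsSum_nil]
  | cons a L ih =>
    rw [varsSum_cons, List.count_cons]
    simp only [Finsupp.add_apply, Finsupp.single_apply, ih]
    by_cases h : a = i <;> simp [h] <;> omega

lemma perm_of_varsSum_eq {L L' : List (Fin n)} (h : varsSum L = varsSum L') : L.Perm L' := by
  rw [List.perm_iff_count]
  intro a
  rw [← varsSum_apply, ← varsSum_apply, h]

lemma XiList_cons (B : Set (Mon n)) (ρ : Mon n → MvPolynomial (Fin n) K)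
    (i : Fin n) (L : List (Fin n)) :
    XiList B ρ (i :: L) = muF B i (redList B (border B) ρ L)
      + (X i : MvPolynomial (Fin n) K) • XiList B ρ L := by
  have key : XiList B ρ (i :: L) = ∑ l : Fin (L.length + 1),
      (monomial (varsSum ((i :: L).take (l : ℕ))) (1 : K) : MvPolynomial (Fin n) K) •
        muF B ((i :: L).get l) (redList B (border B) ρ ((i :: L).drop ((l : ℕ) + 1))) := rfl
  rw [key, Fin.sum_univ_succ]
  congr 1
  · simp [varsSum_nil, MvPolynomial.monomial_zero']
  · unfold XiList
    rw [Finset.smul_sum]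
    refine Finset.sum_congr rfl fun l _ => ?_
    have h1 : (i :: L).take ((Fin.succ l : Fin (L.length + 1)) : ℕ) = i :: L.take (l : ℕ) := rfl
    have h2 : (i :: L).get (Fin.succ l) = L.get l := rfl
    have h3 : (i :: L).drop (((Fin.succ l : Fin (L.length + 1)) : ℕ) + 1) = L.drop ((l : ℕ) + 1) := rfl
    rw [h1, h2, h3, varsSum_cons, smul_smul]
    congr 1
    rw [MvPolynomial.X, monomial_mul, one_mul]


lemma Phi_mem (B : Set (Mon n)) (ρ : Mon n → MvPolynomial (Fin n) K)
    {q : MvPolynomial (Fin n) K} (hq : q ∈ spanMon K B) (i j : Fin n) :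
    (X i : MvPolynomial (Fin n) K) • muF B j q
      + muF B i (piF B (border B) ρ (X j * q))
      - (X j : MvPolynomial (Fin n) K) • muF B i q
      - muF B j (piF B (border B) ρ (X i * q))
      ∈ Submodule.span (MvPolynomial (Fin n) K) (XiGen B ρ) := by
  induction hq using Submodule.span_induction with
  | mem x hx =>
    obtain ⟨m, hm, rfl⟩ := hx
    exact Submodule.subset_span ⟨m, hm, i, j, rfl⟩
  | zero =>
    simp only [mul_zero, piF_zero, muF_zero, smul_zero, sub_zero, add_zero, zero_add]
    exact Submodule.zero_mem _
  | add a b _ _ iha ihb =>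
    have : (X i : MvPolynomial (Fin n) K) • muF B j (a + b)
        + muF B i (piF B (border B) ρ (X j * (a + b)))
        - (X j : MvPolynomial (Fin n) K) • muF B i (a + b)
        - muF B j (piF B (border B) ρ (X i * (a + b)))
        = ((X i : MvPolynomial (Fin n) K) • muF B j a
            + muF B i (piF B (border B) ρ (X j * a))
            - (X j : MvPolynomial (Fin n) K) • muF B i a
            - muF B j (piF B (border B) ρ (X i * a)))
          + ((X i : MvPolynomial (Fin n) K) • muF B j b
            + muF B i (piF B (border B) ρ (X j * b))
            - (X j : MvPolynomial (Fin n) K) • muF B i b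
            - muF B j (piF B (border B) ρ (X i * b))) := by
      rw [mul_add, mul_add, piF_add, piF_add, muF_add, muF_add, muF_add, muF_add,
        smul_add, smul_add]
      abel
    rw [this]
    exact Submodule.add_mem _ iha ihb
  | smul c a _ iha =>
    have : (X i : MvPolynomial (Fin n) K) • muF B j (c • a)
        + muF B i (piF B (border B) ρ (X j * (c • a)))
        - (X j : MvPolynomial (Fin n) K) • muF B i (c • a)
        - muF B j (piF B (border B) ρ (X i * (c • a)))
        = (C c : MvPolynomial (Fin n) K) •
          ((X i : MvPolynomial (Fin n) K) • muF B j a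
            + muF B i (piF B (border B) ρ (X j * a))
            - (X j : MvPolynomial (Fin n) K) • muF B i a
            - muF B j (piF B (border B) ρ (X i * a))) := by
      rw [mul_smul_comm, mul_smul_comm, piF_smulK, piF_smulK, muF_smul, muF_smul,
        muF_smul, muF_smul]
      module
    rw [this]
    exact Submodule.smul_mem _ _ iha

end Aux

/-- two decompositions of the same monomial as a product of variables
    yield vectors Ξ that differ by an element of the module Ξ of commutation syzygies. -/
theorem stmt12 {n : ℕ} {K : Type} [Field K] (B : Set (Mon n))
    (ρ : Mon n → MvPolynomial (Fin n) K)
    (hB : ConnectedTo1 B)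
    (hρ : ∀ ω ∈ border B, ↑(ρ ω).support ⊆ B)
    (hcomm : ∀ b ∈ spanMon K B, ∀ i j : Fin n,
      piF B (border B) ρ (X i * piF B (border B) ρ (X j * b)) =
      piF B (border B) ρ (X j * piF B (border B) ρ (X i * b))) :
    ∀ L L' : List (Fin n), varsSum L = varsSum L' →
      XiList B ρ L - XiList B ρ L' ∈
        Submodule.span (MvPolynomial (Fin n) K) (XiGen B ρ) := by
  intro L L' h
  have hp := perm_of_varsSum_eq h
  clear h
  induction hp with
  | nil => simp
  | cons x h ih =>
    rename_i l₁ l₂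
    rw [XiList_cons, XiList_cons, redList_perm hB.1 hρ hcomm h]
    have heq : muF B x (redList B (border B) ρ l₂)
        + (X x : MvPolynomial (Fin n) K) • XiList B ρ l₁
        - (muF B x (redList B (border B) ρ l₂)
          + (X x : MvPolynomial (Fin n) K) • XiList B ρ l₂)
        = (X x : MvPolynomial (Fin n) K) • (XiList B ρ l₁ - XiList B ρ l₂) := by
      rw [smul_sub]; abel
    rw [heq]
    exact Submodule.smul_mem _ _ ih
  | swap x y l =>
    rw [XiList_cons B ρ y (x :: l), XiList_cons B ρ x l,
      XiList_cons B ρ x (y :: l), XiList_cons B ρ y l]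
    have hrx : redList B (border B) ρ (x :: l)
        = piF B (border B) ρ (X x * redList B (border B) ρ l) := rfl
    have hry : redList B (border B) ρ (y :: l)
        = piF B (border B) ρ (X y * redList B (border B) ρ l) := rfl
    rw [hrx, hry]
    set r := redList B (border B) ρ l with hr
    have heq : muF B y (piF B (border B) ρ (X x * r))
        + (X y : MvPolynomial (Fin n) K) • (muF B x r
          + (X x : MvPolynomial (Fin n) K) • XiList B ρ l)
        - (muF B x (piF B (border B) ρ (X y * r))
          + (X x : MvPolynomial (Fin n) K) • (muF B y r
            + (X y : MvPolynomial (Fin n) K) • XiList B ρ l))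
        = (X y : MvPolynomial (Fin n) K) • muF B x r
          + muF B y (piF B (border B) ρ (X x * r))
          - (X x : MvPolynomial (Fin n) K) • muF B y r
          - muF B x (piF B (border B) ρ (X y * r)) := by
      rw [smul_add, smul_add, smul_smul, smul_smul, mul_comm (X x : MvPolynomial (Fin n) K) (X y)]
      abel
    rw [heq]
    exact Phi_mem B ρ (redList_mem_spanMon hB.1 hρ l) y x
  | trans h1 h2 ih1 ih2 =>
    have h := Submodule.add_mem _ ih1 ih2
    rwa [sub_add_sub_cancel] at h
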